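/- For every I > 0, the trace of J0(S(I), I) equals −Ψ(I)/(I + b)². Moreover, if I > 0 satisfies f(I) = 0, f'(I) > 0 (where f'(I) = 2A2·I + A1), and Ψ(I) > 0, then every complex eigenvalue of the matrix J0(S(I), I) has strictly negative real part. -/
import Mathlib


/-- For every `I > 0`, the trace of `J₀(S(I), I)` equals
`−Ψ(I)/(I + b)²`. Moreover, if `I > 0` satisfies `f(I) = 0`, `f'(I) > 0`
(where `f'(I) = 2A₂·I + A₁`) and `Ψ(I) > 0`, then every complex eigenvalue
of the matrix `J₀(S(I), I)` has strictly negative real part. -/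
theorem stmt15 (A d β b μ0 μ1 : ℝ)
    (hA : 0 < A) (hd : 0 < d) (hβ : 0 < β) (hb : 0 < b)
    (hμ0 : 0 < μ0) (hμ1 : 0 < μ1) (hμ : μ0 < μ1)
    (R0 : ℝ) (hR0 : R0 = β * A / (d * (d + μ1)))
    (A2 A1 A0 : ℝ)
    (hA2 : A2 = (d + μ0) * β)
    (hA1 : A1 = d ^ 2 + (b * β + μ0) * d + (b * μ1 - A) * β)
    (hA0 : A0 = b * d * (d + μ1) * (1 - R0))
    (f f' h h' Ψ : ℝ → ℝ)
    (hf : ∀ I, f I = A2 * I ^ 2 + A1 * I + A0)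
    (hf' : ∀ I, f' I = 2 * A2 * I + A1)
    (hh : ∀ I, h I = μ0 + (μ1 - μ0) * b / (I + b))
    (hh' : ∀ I, h' I = -((μ1 - μ0) * b / (I + b) ^ 2))
    (hΨ : ∀ I, Ψ I = β * I ^ 3 + (2 * b * β + d) * I ^ 2
      + (b ^ 2 * β + 2 * b * d - b * μ1 + b * μ0) * I + b ^ 2 * d)
    (J : ℝ → Matrix (Fin 2) (Fin 2) ℝ)
    (hJ : ∀ I, J I = !![-(d + β * I), -(h I + d); β * I, -(h' I * I)]) :
    (∀ I : ℝ, 0 < I → (J I).trace = -Ψ I / (I + b) ^ 2) ∧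
    (∀ I : ℝ, 0 < I → f I = 0 → 0 < f' I → 0 < Ψ I →
      ∀ μ : ℂ, (∃ v : Fin 2 → ℂ, v ≠ 0 ∧
        ((J I).map (fun x : ℝ => (x : ℂ))).mulVec v = μ • v) → μ.re < 0) := by
  have htr : ∀ I : ℝ, 0 < I → (J I).trace = -Ψ I / (I + b) ^ 2 := by
    intro I hI
    have hIb : (0:ℝ) < I + b := by linarith
    rw [hJ, Matrix.trace_fin_two_of, hh', hΨ]
    field_simp
    ring
  refine ⟨htr, ?_⟩
  intro I hI hfI hfI' hΨI μ ⟨v, hv, hmul⟩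
  have hIb : (0:ℝ) < I + b := by linarith
  -- real trace and determinant
  set T : ℝ := -(d + β * I) + -(h' I * I) with hT
  set D : ℝ := -(d + β * I) * -(h' I * I) - -(h I + d) * (β * I) with hD
  have hTtrace : (J I).trace = T := by rw [hJ, Matrix.trace_fin_two_of]
  have hTneg : T < 0 := by
    rw [← hTtrace, htr I hI]
    have : 0 < Ψ I / (I + b) ^ 2 := div_pos hΨI (by positivity)
    rw [neg_div]; linarith
  have hDkey : D * (I + b) ^ 2 = f' I * (I * (I + b)) - I * f I := by
    rw [hD, hh, hh', hf', hf, hA2, hA1, hA0, hR0]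
    have hd' : d * (d + μ1) ≠ 0 := by positivity
    field_simp
    ring
  have hDpos : 0 < D := by
    have h1 : D * (I + b) ^ 2 = f' I * (I * (I + b)) := by
      rw [hDkey, hfI]; ring
    have h2 : 0 < f' I * (I * (I + b)) := by positivity
    nlinarith [sq_nonneg (I + b)]
  -- characteristic equation
  have e0 := congrFun hmul 0
  have e1 := congrFun hmul 1
  simp [hJ, Matrix.mulVec, dotProduct, Fin.sum_univ_two] at e0 e1
  have hchar : μ ^ 2 - (T : ℂ) * μ + (D : ℂ) = 0 := by
    have h0 : (μ ^ 2 - (T : ℂ) * μ + (D : ℂ)) * v 0 = 0 := by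
      have hT' : (T : ℂ) = -(d + β * I) + -((h' I : ℂ) * I) := by
        rw [hT]; push_cast; ring
      have hD' : (D : ℂ) = -(d + β * I) * -((h' I : ℂ) * I) - -((h I : ℂ) + d) * (β * I) := by
        rw [hD]; push_cast; ring
      rw [hT', hD']
      linear_combination (-(((h' I : ℂ)) * I) - μ) * e0 + ((h I : ℂ) + d) * e1
    have h1 : (μ ^ 2 - (T : ℂ) * μ + (D : ℂ)) * v 1 = 0 := by
      have hT' : (T : ℂ) = -(d + β * I) + -((h' I : ℂ) * I) := by
        rw [hT]; push_cast; ring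
      have hD' : (D : ℂ) = -(d + β * I) * -((h' I : ℂ) * I) - -((h I : ℂ) + d) * (β * I) := by
        rw [hD]; push_cast; ring
      rw [hT', hD']
      linear_combination (-((β : ℂ) * I)) * e0 + (-((d:ℂ) + β * I) - μ) * e1
    rcases mul_eq_zero.mp h0 with hc | hv0
    · exact hc
    rcases mul_eq_zero.mp h1 with hc | hv1
    · exact hc
    exact absurd (funext fun i => by fin_cases i <;> assumption) hv
  -- take real and imaginary parts
  set x := μ.re with hx
  set y := μ.im with hy
  have hre : x ^ 2 - y ^ 2 - T * x + D = 0 := by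
    have h1 := congrArg Complex.re hchar
    simp only [Complex.add_re, Complex.sub_re, Complex.mul_re, Complex.ofReal_re,
      Complex.ofReal_im, Complex.zero_re, pow_two, ← hx, ← hy] at h1
    linear_combination h1
  have him : y * (2 * x - T) = 0 := by
    have h1 := congrArg Complex.im hchar
    simp only [Complex.add_im, Complex.sub_im, Complex.mul_im, Complex.ofReal_re,
      Complex.ofReal_im, Complex.zero_im, pow_two, ← hx, ← hy] at h1
    linear_combination h1
  by_contra hxn
  push_neg at hxn
  have hy0 : y = 0 := by
    have hpos : 2 * x - T > 0 := by linarith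
    rcases mul_eq_zero.mp him with hc | hc
    · exact hc
    · linarith
  rw [hy0] at hre
  nlinarith [mul_nonneg (neg_nonneg.mpr (le_of_lt hTneg)) hxn, sq_nonneg x]
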